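/- Let G be a group, H a subgroup of G of finite index, and N(H) = ⋂_{g ∈ G} g⁻¹Hg the normal core of H in G. Then G is not icc if and only if at least one of the following holds: (i) H is not icc; (ii) there exists g ∈ G \ H with g ≠ 1 of finite order such that g⁻¹kg = k for all k ∈ N(H); (iii) there exists g ∈ G \ H with g ≠ 1 of finite order and some h ∈ N(H) such that g⁻¹kg = h⁻¹kh for all k ∈ N(H). -/

import Mathlib

section Helpers

variable {G : Type*} [Group G]

private lemma cls_mem (g : G) : g ∈ {h : G | ∃ x : G, x⁻¹ * g * x = h} := ⟨1, by group⟩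

private lemma cls_mul_subset (a b : G) :
    {h : G | ∃ x : G, x⁻¹ * (a * b) * x = h} ⊆
      Set.image2 (fun u v => u * v) {h : G | ∃ x : G, x⁻¹ * a * x = h}
        {h : G | ∃ x : G, x⁻¹ * b * x = h} := by
  rintro _ ⟨x, rfl⟩
  exact ⟨x⁻¹ * a * x, ⟨x, rfl⟩, x⁻¹ * b * x, ⟨x, rfl⟩, by group⟩

private lemma cls_inv_subset (a : G) :
    {h : G | ∃ x : G, x⁻¹ * a⁻¹ * x = h} ⊆
      (fun u => u⁻¹) '' {h : G | ∃ x : G, x⁻¹ * a * x = h} := by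
  rintro _ ⟨x, rfl⟩
  exact ⟨x⁻¹ * a * x, ⟨x, rfl⟩, by group⟩

private lemma cls_conj_subset (a y : G) :
    {h : G | ∃ x : G, x⁻¹ * (y⁻¹ * a * y) * x = h} ⊆
      {h : G | ∃ x : G, x⁻¹ * a * x = h} := by
  rintro _ ⟨x, rfl⟩
  exact ⟨y * x, by group⟩

private lemma cls_pow_subset (a : G) (n : ℕ) :
    {h : G | ∃ x : G, x⁻¹ * (a ^ n) * x = h} ⊆
      (fun u => u ^ n) '' {h : G | ∃ x : G, x⁻¹ * a * x = h} := by
  rintro _ ⟨x, rfl⟩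
  refine ⟨x⁻¹ * a * x, ⟨x, rfl⟩, ?_⟩
  have := conj_pow (i := n) (a := x⁻¹) (b := a)
  simpa using this

/-- If an element centralizes a finite-index subgroup, its conjugacy class is finite. -/
private lemma cls_finite_of_centralizes (K : Subgroup G) [K.FiniteIndex] (c : G)
    (hc : ∀ k ∈ K, k * c = c * k) :
    {h : G | ∃ x : G, x⁻¹ * c * x = h}.Finite := by
  have hsub : {h : G | ∃ x : G, x⁻¹ * c * x = h} ⊆
      Set.range (fun q : G ⧸ K => Quotient.out q * c * (Quotient.out q)⁻¹) := by
    rintro _ ⟨x, rfl⟩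
    refine ⟨(QuotientGroup.mk x⁻¹ : G ⧸ K), ?_⟩
    set q : G ⧸ K := QuotientGroup.mk x⁻¹
    have hy : (Quotient.out q)⁻¹ * x⁻¹ ∈ K := QuotientGroup.eq.mp (by simp [q])
    have hcy := hc _ hy
    set r := Quotient.out q with hr
    -- x⁻¹ = r * (r⁻¹ * x⁻¹), and r⁻¹*x⁻¹ commutes with c
    calc r * c * r⁻¹ = r * ((r⁻¹ * x⁻¹) * c * (r⁻¹ * x⁻¹)⁻¹) * r⁻¹ := by
          rw [hcy]; group
      _ = x⁻¹ * c * x := by group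
  exact (Set.finite_range _).subset hsub

/-- If an element of a finite-index subgroup has finite conjugacy class inside the
subgroup, it has finite conjugacy class in the whole group. -/
private lemma cls_finite_of_cls_finite_in (K : Subgroup G) [K.FiniteIndex] (b : K)
    (hfin : {h : K | ∃ x : K, x⁻¹ * b * x = h}.Finite) :
    {h : G | ∃ x : G, x⁻¹ * (b : G) * x = h}.Finite := by
  have hsub : {h : G | ∃ x : G, x⁻¹ * (b : G) * x = h} ⊆
      ⋃ q : G ⧸ K, (fun c => Quotient.out q * c * (Quotient.out q)⁻¹) ''
        ((fun u : K => (u : G)) '' {h : K | ∃ x : K, x⁻¹ * b * x = h}) := by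
    rintro _ ⟨x, rfl⟩
    refine Set.mem_iUnion.2 ⟨(QuotientGroup.mk x⁻¹ : G ⧸ K), ?_⟩
    set q : G ⧸ K := QuotientGroup.mk x⁻¹
    have hy : (Quotient.out q)⁻¹ * x⁻¹ ∈ K := QuotientGroup.eq.mp (by simp [q])
    set r := Quotient.out q
    set y : K := ⟨r⁻¹ * x⁻¹, hy⟩
    refine ⟨((y⁻¹)⁻¹ * b * y⁻¹ : K), ⟨(y⁻¹)⁻¹ * b * y⁻¹, ⟨y⁻¹, rfl⟩, rfl⟩, ?_⟩
    have hyc : (y : G) = r⁻¹ * x⁻¹ := rfl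
    show r * (((y⁻¹)⁻¹ * b * y⁻¹ : K) : G) * r⁻¹ = x⁻¹ * (b : G) * x
    push_cast
    rw [hyc]
    group
  exact Set.Finite.subset (Set.finite_iUnion fun q => ((hfin.image _).image _)) hsub

private lemma subtype_cls_image (K : Subgroup G) (b : K) :
    (fun u : K => (u : G)) '' {h : K | ∃ x : K, x⁻¹ * b * x = h} ⊆
      {h : G | ∃ x : G, x⁻¹ * (b : G) * x = h} := by
  rintro _ ⟨h', ⟨x, rfl⟩, rfl⟩
  exact ⟨(x : G), by push_cast; ring_nf⟩

end Helpers

/-- A group is *icc* (with infinite conjugacy classes) if it is nontrivial and the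
conjugacy class of every nontrivial element is infinite. -/
def IsICC (G : Type*) [Group G] : Prop :=
  Nontrivial G ∧ ∀ g : G, g ≠ 1 → {h : G | ∃ x : G, x⁻¹ * g * x = h}.Infinite


/-- Auxiliary: if some `g ∉ H` acts on the normal core as conjugation by an element of the
normal core, then `G` is not icc. -/
private lemma not_icc_of_inner {G : Type*} [Group G] (H : Subgroup G) [H.FiniteIndex]
    (g h : G) (hg : g ∉ H) (hh : h ∈ H.normalCore)
    (hc : ∀ k ∈ H.normalCore, g⁻¹ * k * g = h⁻¹ * k * h) : ¬ IsICC G := by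
  intro hG
  set c : G := g * h⁻¹ with hcdef
  have hcne : c ≠ 1 := by
    intro h1
    have : g = h := by
      have : g * h⁻¹ * h = 1 * h := by rw [← hcdef, h1]
      simpa using this
    exact hg (this ▸ H.normalCore_le hh)
  have hcent : ∀ k ∈ H.normalCore, k * c = c * k := by
    intro k hk
    have hck := hc k hk
    calc k * c = g * (g⁻¹ * k * g) * h⁻¹ := by rw [hcdef]; group
      _ = g * (h⁻¹ * k * h) * h⁻¹ := by rw [hck]
      _ = c * k := by rw [hcdef]; group
  have hfin := cls_finite_of_centralizes H.normalCore c hcent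
  exact Set.not_infinite.mpr hfin (hG.2 c hcne)

theorem stmt_5 {G : Type*} [Group G] (H : Subgroup G) [H.FiniteIndex] :
    ¬ IsICC G ↔
      (¬ IsICC H ∨
        (∃ g : G, g ∉ H ∧ g ≠ 1 ∧ IsOfFinOrder g ∧
          ∀ k ∈ H.normalCore, g⁻¹ * k * g = k) ∨
        (∃ g : G, g ∉ H ∧ g ≠ 1 ∧ IsOfFinOrder g ∧
          ∃ h ∈ H.normalCore, ∀ k ∈ H.normalCore, g⁻¹ * k * g = h⁻¹ * k * h)) := by
  constructor
  · intro hG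
    rcases not_and_or.mp hG with h1 | h2
    · -- G is trivial, hence H is not icc
      left
      intro hH
      have : Subsingleton G := not_nontrivial_iff_subsingleton.mp h1
      exact not_nontrivial H hH.1
    · push_neg at h2
      obtain ⟨a, ha1, hfa⟩ := h2
      by_cases hH : IsICC H
      · -- produce condition (ii)
        right; left
        have FCH : ∀ b : G, b ∈ H → {h : G | ∃ x : G, x⁻¹ * b * x = h}.Finite → b = 1 := by
          intro b hb hfin
          by_contra hb1
          have hbH : (⟨b, hb⟩ : H) ≠ 1 := fun h => hb1 (congrArg Subtype.val h)
          have hinf := hH.2 _ hbH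
          have himg : ((fun u : H => (u : G)) ''
              {h : H | ∃ x : H, x⁻¹ * (⟨b, hb⟩ : H) * x = h}).Infinite :=
            hinf.image (Set.injOn_of_injective Subtype.val_injective)
          exact Set.not_infinite.mpr hfin (himg.mono (subtype_cls_image H ⟨b, hb⟩))
        have haH : a ∉ H := fun h => ha1 (FCH a h hfa)
        -- a has finite order
        have key : ∀ i j : ℕ, i < j → (QuotientGroup.mk (a ^ i) : G ⧸ H) = QuotientGroup.mk (a ^ j) →
            IsOfFinOrder a := by
          intro i j hij heq
          have hle : i ≤ j := le_of_lt hij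
          have hmem : (a ^ i)⁻¹ * a ^ j ∈ H := QuotientGroup.eq.mp heq
          have hpow : (a ^ i)⁻¹ * a ^ j = a ^ (j - i) := by
            have h' : a ^ i * a ^ (j - i) = a ^ j := by
              rw [← pow_add, Nat.add_sub_cancel' hle]
            rw [← h']; group
          rw [hpow] at hmem
          have hfind : {h : G | ∃ x : G, x⁻¹ * (a ^ (j - i)) * x = h}.Finite :=
            (hfa.image (fun u => u ^ (j - i))).subset (cls_pow_subset a (j - i))
          have := FCH _ hmem hfind
          exact isOfFinOrder_iff_pow_eq_one.mpr ⟨j - i, Nat.sub_pos_of_lt hij, this⟩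
        have hford : IsOfFinOrder a := by
          obtain ⟨i, j, hij, heq⟩ :=
            Finite.exists_ne_map_eq_of_infinite (fun i : ℕ => (QuotientGroup.mk (a ^ i) : G ⧸ H))
          rcases hij.lt_or_gt with h | h
          · exact key i j h heq
          · exact key j i h heq.symm
        refine ⟨a, haH, ha1, hford, ?_⟩
        intro k hk
        have hkH : k ∈ H.normalCore := hk
        -- the commutator t = a⁻¹ * k⁻¹ * a * k is trivial
        have h1 : a⁻¹ * k⁻¹ * a ∈ H.normalCore := by
          have := (Subgroup.normalCore_normal H).conj_mem _ (H.normalCore.inv_mem hkH) a⁻¹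
          simpa using this
        have htN : a⁻¹ * k⁻¹ * a * k ∈ H.normalCore := H.normalCore.mul_mem h1 hkH
        have htH : a⁻¹ * k⁻¹ * a * k ∈ H := H.normalCore_le htN
        have hfin1 : {h : G | ∃ x : G, x⁻¹ * a⁻¹ * x = h}.Finite :=
          (hfa.image (fun u => u⁻¹)).subset (cls_inv_subset a)
        have hfin2 : {h : G | ∃ x : G, x⁻¹ * (k⁻¹ * a * k) * x = h}.Finite :=
          hfa.subset (cls_conj_subset a k)
        have hre : a⁻¹ * k⁻¹ * a * k = a⁻¹ * (k⁻¹ * a * k) := by group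
        have hfint : {h : G | ∃ x : G, x⁻¹ * (a⁻¹ * k⁻¹ * a * k) * x = h}.Finite := by
          rw [hre]
          exact (Set.Finite.image2 _ hfin1 hfin2).subset (cls_mul_subset a⁻¹ (k⁻¹ * a * k))
        have ht1 : a⁻¹ * k⁻¹ * a * k = 1 := FCH _ htH hfint
        have h2 : a⁻¹ * k⁻¹ * a = k⁻¹ := mul_eq_one_iff_eq_inv.mp ht1
        calc a⁻¹ * k * a = (a⁻¹ * k⁻¹ * a)⁻¹ := by group
          _ = (k⁻¹)⁻¹ := by rw [h2]
          _ = k := inv_inv k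
      · exact Or.inl hH
  · rintro (hH | ⟨g, hgH, hg1, _, hcent⟩ | ⟨g, hgH, hg1, _, h, hhN, hconj⟩)
    · -- ¬ IsICC H implies ¬ IsICC G
      intro hG
      apply hH
      constructor
      · by_contra hnt
        have hs : Subsingleton H := not_nontrivial_iff_subsingleton.mp hnt
        have hfH : Finite H := Finite.of_subsingleton
        have hfG : Finite G := Finite.of_equiv _ (Subgroup.groupEquivQuotientProdSubgroup (s := H)).symm
        haveI := hG.1
        obtain ⟨g, hgne⟩ := exists_ne (1 : G)
        exact Set.not_infinite.mpr (Set.toFinite _) (hG.2 g hgne)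
      · intro b hb
        by_contra hfin
        rw [Set.not_infinite] at hfin
        have hfinG := cls_finite_of_cls_finite_in H b hfin
        have hb' : (b : G) ≠ 1 := fun h => hb (Subtype.ext h)
        exact Set.not_infinite.mpr hfinG (hG.2 _ hb')
    · exact not_icc_of_inner H g 1 hgH H.normalCore.one_mem
        (fun k hk => by rw [hcent k hk]; group)
    · exact not_icc_of_inner H g h hgH hhN hconj
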